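/- arXiv:1609.00128 — 2 statements merged into one kernel-verified Lean document; each statement's English description precedes it below -/
import Mathlib

section
/- Let κ₁, κ₂, κ₃ be pairwise distinct polynomials with complex coefficients, each with zero constant term. For a polynomial p and θ ∈ ℝ, write p ≺ 0 on the ray arg z = θ if Re p(re^{iθ}) < 0 for all sufficiently large r > 0, and 0 ≺ p if Re p(re^{iθ}) > 0 for all sufficiently large r; write p ≺ q if q − p satisfies 0 ≺ q − p. Assume there is NO θ ∈ ℝ such that κ₁ ≺ 0, κ₂ ≺ 0 and κ₃ ≺ 0 simultaneously on the ray arg z = θ. Then, after relabelling κ₁, κ₂, κ₃ by a permutation, there exists θ ∈ ℝ such that on the ray arg z = θ one of the following holds: (A) κ₁ ≺ κ₂ ≺ 0 ≺ κ₃; or (B) κ₁ ≺ κ₂ ≺ 0 and κ₃ is the zero polynomial; or (C) κ₁ ≺ 0 ≺ κ₃ and κ₂ is the zero polynomial. -/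
/-- `p ≺ 0` on the ray `arg z = θ`: the real part of `p(re^{iθ})` is negative
for all sufficiently large `r`. -/
def NegOnRay (p : Polynomial ℂ) (θ : ℝ) : Prop :=
  ∃ R : ℝ, ∀ r : ℝ, R ≤ r →
    (Polynomial.eval ((r : ℂ) * Complex.exp (θ * Complex.I)) p).re < 0

namespace Statement14Aux

open Polynomial Filter Set MeasureTheory intervalIntegral Real

/-- indicator of negativity -/
noncomputable def ind (x : ℝ) : ℝ := if x < 0 then 1 else 0

lemma ind_nonneg (x : ℝ) : 0 ≤ ind x := by unfold ind; split <;> norm_num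

lemma ind_le_one (x : ℝ) : ind x ≤ 1 := by unfold ind; split <;> norm_num

lemma ind_of_neg {x : ℝ} (h : x < 0) : ind x = 1 := if_pos h

lemma ind_of_nonneg {x : ℝ} (h : 0 ≤ x) : ind x = 0 := if_neg (not_lt.2 h)

lemma measurable_ind : Measurable ind := by
  unfold ind
  exact Measurable.ite measurableSet_Iio measurable_const measurable_const

lemma ind_cos_intble (g : ℝ → ℝ) (hg : Measurable g) (a b : ℝ) :
    IntervalIntegrable (fun θ => ind (Real.cos (g θ))) volume a b := by
  apply IntervalIntegrable.mono_fun (_root_.intervalIntegrable_const (c := (1:ℝ)))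
  · exact (measurable_ind.comp (Real.measurable_cos.comp hg)).aestronglyMeasurable
  · refine Filter.Eventually.of_forall fun x => ?_
    simp only [Real.norm_eq_abs, abs_of_nonneg (ind_nonneg _), abs_one]
    exact ind_le_one _

lemma integral_ind_cos_one_period : ∫ u in (0:ℝ)..(2*π), ind (Real.cos u) = π := by
  have hInt : ∀ a b : ℝ, IntervalIntegrable (fun u => ind (Real.cos u)) volume a b :=
    ind_cos_intble id measurable_id
  have hpi := Real.pi_pos
  have h1 : ∫ u in (0:ℝ)..(π/2), ind (Real.cos u) = 0 := by
    rw [intervalIntegral.integral_congr (g := fun _ => (0:ℝ)) ?_, intervalIntegral.integral_zero]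
    intro x hx
    rw [Set.uIcc_of_le (by linarith)] at hx
    exact ind_of_nonneg (Real.cos_nonneg_of_mem_Icc ⟨by linarith [hx.1], hx.2⟩)
  have h3 : ∫ u in (3*π/2)..(2*π), ind (Real.cos u) = 0 := by
    rw [intervalIntegral.integral_congr (g := fun _ => (0:ℝ)) ?_, intervalIntegral.integral_zero]
    intro x hx
    rw [Set.uIcc_of_le (by linarith)] at hx
    have h0 : (0:ℝ) ≤ Real.cos (x - 2*π) :=
      Real.cos_nonneg_of_mem_Icc ⟨by linarith [hx.1], by linarith [hx.2]⟩
    rw [Real.cos_sub_two_pi] at h0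
    exact ind_of_nonneg h0
  have h2 : ∫ u in (π/2)..(3*π/2), ind (Real.cos u) = π := by
    have hae : ∀ᵐ x : ℝ, x ∉ ({3*π/2} : Set ℝ) :=
      measure_eq_zero_iff_ae_notMem.mp ((Set.countable_singleton _).measure_zero _)
    rw [intervalIntegral.integral_congr_ae (g := fun _ => (1:ℝ)) ?_]
    · rw [intervalIntegral.integral_const, smul_eq_mul, mul_one]; ring
    · filter_upwards [hae] with x hx hmem
      rw [Set.uIoc_of_le (by linarith)] at hmem
      have hx3 : x < 3*π/2 := lt_of_le_of_ne hmem.2 (by simpa using hx)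
      have hcos : 0 < Real.cos (x - π) :=
        Real.cos_pos_of_mem_Ioo ⟨by linarith [hmem.1], by linarith⟩
      rw [Real.cos_sub_pi] at hcos
      exact ind_of_neg (by linarith)
  have e1 := intervalIntegral.integral_add_adjacent_intervals (hInt 0 (π/2)) (hInt (π/2) (3*π/2))
  have e2 := intervalIntegral.integral_add_adjacent_intervals (hInt 0 (3*π/2)) (hInt (3*π/2) (2*π))
  rw [h3, add_zero] at e2
  rw [h1, zero_add, h2] at e1
  linarith

lemma integral_ind_cos (n : ℕ) (hn : 1 ≤ n) (φ : ℝ) :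
    ∫ θ in (0:ℝ)..(2*π), ind (Real.cos ((n:ℝ) * θ + φ)) = π := by
  have hn0 : (n:ℝ) ≠ 0 := Nat.cast_ne_zero.mpr (by omega)
  have hInt : ∀ a b : ℝ, IntervalIntegrable (fun u => ind (Real.cos u)) volume a b :=
    ind_cos_intble id measurable_id
  have hper : Function.Periodic (fun u => ind (Real.cos u)) (2*π) := fun x => by
    simp [Real.cos_add_two_pi]
  rw [intervalIntegral.integral_comp_mul_add (f := fun u => ind (Real.cos u)) hn0 φ]
  rw [show (n:ℝ) * 0 + φ = φ by ring,
      show (n:ℝ) * (2*π) + φ = φ + (n : ℤ) • (2*π) by rw [zsmul_eq_mul]; push_cast; ring,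
      hper.intervalIntegral_add_zsmul_eq n φ hInt,
      hper.intervalIntegral_add_eq φ 0, zero_add, integral_ind_cos_one_period]
  rw [zsmul_eq_mul, smul_eq_mul]
  push_cast
  field_simp

lemma exists_pair (n₁ n₂ n₃ : ℕ) (h₁ : 1 ≤ n₁) (h₂ : 1 ≤ n₂) (h₃ : 1 ≤ n₃) (φ₁ φ₂ φ₃ : ℝ) :
    (∃ θ : ℝ, Real.cos ((n₁:ℝ)*θ+φ₁) < 0 ∧ Real.cos ((n₂:ℝ)*θ+φ₂) < 0) ∨
    (∃ θ : ℝ, Real.cos ((n₁:ℝ)*θ+φ₁) < 0 ∧ Real.cos ((n₃:ℝ)*θ+φ₃) < 0) ∨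
    (∃ θ : ℝ, Real.cos ((n₂:ℝ)*θ+φ₂) < 0 ∧ Real.cos ((n₃:ℝ)*θ+φ₃) < 0) := by
  by_contra hcon
  push_neg at hcon
  obtain ⟨hA, hB, hC⟩ := hcon
  have hpi := Real.pi_pos
  have hi : ∀ (n : ℕ) (φ : ℝ),
      IntervalIntegrable (fun θ => ind (Real.cos ((n:ℝ)*θ+φ))) volume 0 (2*π) := by
    intro n φ
    exact ind_cos_intble (fun θ => (n:ℝ)*θ+φ) (by fun_prop) 0 (2*π)
  have hptw : ∀ θ ∈ Set.Icc (0:ℝ) (2*π),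
      (fun θ => ind (Real.cos ((n₁:ℝ)*θ+φ₁)) + ind (Real.cos ((n₂:ℝ)*θ+φ₂))
        + ind (Real.cos ((n₃:ℝ)*θ+φ₃))) θ ≤ (fun _ : ℝ => (1:ℝ)) θ := by
    intro θ _
    simp only
    by_cases c1 : Real.cos ((n₁:ℝ)*θ+φ₁) < 0
    · rw [ind_of_neg c1, ind_of_nonneg (hA θ c1), ind_of_nonneg (hB θ c1)]
      norm_num
    · by_cases c2 : Real.cos ((n₂:ℝ)*θ+φ₂) < 0
      · rw [ind_of_nonneg (not_lt.1 c1), ind_of_neg c2, ind_of_nonneg (hC θ c2)]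
        norm_num
      · rw [ind_of_nonneg (not_lt.1 c1), ind_of_nonneg (not_lt.1 c2)]
        have := ind_le_one (Real.cos ((n₃:ℝ)*θ+φ₃))
        linarith
  have hIsum : IntervalIntegrable (fun θ => ind (Real.cos ((n₁:ℝ)*θ+φ₁))
      + ind (Real.cos ((n₂:ℝ)*θ+φ₂)) + ind (Real.cos ((n₃:ℝ)*θ+φ₃))) volume 0 (2*π) :=
    ((hi n₁ φ₁).add (hi n₂ φ₂)).add (hi n₃ φ₃)
  have hmono := intervalIntegral.integral_mono_on (by linarith : (0:ℝ) ≤ 2*π) hIsum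
    intervalIntegrable_const hptw
  rw [intervalIntegral.integral_add ((hi n₁ φ₁).add (hi n₂ φ₂)) (hi n₃ φ₃),
      intervalIntegral.integral_add (hi n₁ φ₁) (hi n₂ φ₂),
      integral_ind_cos n₁ h₁ φ₁, integral_ind_cos n₂ h₂ φ₂, integral_ind_cos n₃ h₃ φ₃,
      intervalIntegral.integral_const, smul_eq_mul, mul_one, sub_zero] at hmono
  linarith

lemma countable_cos_zero (n : ℕ) (hn : 1 ≤ n) (φ : ℝ) :
    Set.Countable {θ : ℝ | Real.cos ((n:ℝ)*θ+φ) = 0} := by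
  have hn0 : (n:ℝ) ≠ 0 := Nat.cast_ne_zero.mpr (by omega)
  have hsub : {θ : ℝ | Real.cos ((n:ℝ)*θ+φ) = 0}
      ⊆ ⋃ k : ℤ, {θ : ℝ | (n:ℝ)*θ+φ = (2*(k:ℝ)+1)*π/2} := by
    intro θ hθ
    rw [Set.mem_setOf_eq, Real.cos_eq_zero_iff] at hθ
    obtain ⟨k, hk⟩ := hθ
    exact Set.mem_iUnion.mpr ⟨k, hk⟩
  refine Set.Countable.mono hsub
    (Set.countable_iUnion fun k => Set.Subsingleton.countable fun x hx y hy => ?_)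
  simp only [Set.mem_setOf_eq] at hx hy
  have hxy : (n:ℝ)*x = (n:ℝ)*y := by linarith
  exact mul_left_cancel₀ hn0 hxy

lemma exists_avoid {U Z₁ Z₂ : Set ℝ} (hU : IsOpen U) (hne : U.Nonempty)
    (h1 : Z₁.Countable) (h2 : Z₂.Countable) : ∃ θ ∈ U, θ ∉ Z₁ ∧ θ ∉ Z₂ := by
  by_contra hcon
  push_neg at hcon
  have hsub : U ⊆ Z₁ ∪ Z₂ := by
    intro θ hθ
    by_cases hz : θ ∈ Z₁
    · exact Or.inl hz
    · exact Or.inr (hcon θ hθ hz)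
  exact absurd (measure_mono_null hsub ((h1.union h2).measure_zero volume))
    (hU.measure_pos volume hne).ne'

/-- the leading cosine of a polynomial along rays -/
noncomputable def cosArg (p : Polynomial ℂ) (θ : ℝ) : ℝ :=
  Real.cos ((p.natDegree : ℝ) * θ + Complex.arg p.leadingCoeff)

lemma natDeg_pos (p : Polynomial ℂ) (hp : p ≠ 0) (h0 : p.coeff 0 = 0) : 1 ≤ p.natDegree := by
  by_contra hcon
  push_neg at hcon
  have h : p.natDegree = 0 := by omega
  have h' := Polynomial.eq_C_of_natDegree_eq_zero h
  rw [h0, map_zero] at h'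
  exact hp h'

lemma Fc_eq (c : ℂ) (n : ℕ) (θ : ℝ) :
    (c * Complex.exp ((n:ℂ) * (θ:ℂ) * Complex.I)).re
      = ‖c‖ * Real.cos ((n:ℝ) * θ + Complex.arg c) := by
  conv_lhs => rw [← Complex.norm_mul_exp_arg_mul_I c]
  rw [mul_assoc, ← Complex.exp_add,
    show (Complex.arg c : ℂ) * Complex.I + (n:ℂ) * (θ:ℂ) * Complex.I
        = (((n:ℝ) * θ + Complex.arg c : ℝ) : ℂ) * Complex.I by push_cast; ring,
    Complex.re_ofReal_mul, Complex.exp_ofReal_mul_I_re]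

lemma negOnRay_of_lead (p : Polynomial ℂ) (hn : 1 ≤ p.natDegree) (θ : ℝ)
    (h : (p.leadingCoeff * Complex.exp ((p.natDegree : ℂ) * (θ:ℂ) * Complex.I)).re < 0) :
    NegOnRay p θ := by
  set n := p.natDegree with hn'
  set Q : Polynomial ℝ := ∑ k ∈ Finset.range (n+1),
    Polynomial.C ((p.coeff k * Complex.exp ((k:ℂ) * (θ:ℂ) * Complex.I)).re) * Polynomial.X ^ k
    with hQ
  have hQeval : ∀ r : ℝ,
      Q.eval r = (Polynomial.eval ((r:ℂ) * Complex.exp ((θ:ℂ) * Complex.I)) p).re := by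
    intro r
    rw [hQ, Polynomial.eval_finset_sum,
      Polynomial.eval_eq_sum_range (p := p) (x := (r:ℂ) * Complex.exp ((θ:ℂ) * Complex.I)),
      Complex.re_sum]
    refine Finset.sum_congr rfl fun k _ => ?_
    simp only [Polynomial.eval_mul, Polynomial.eval_C, Polynomial.eval_pow, Polynomial.eval_X]
    rw [show p.coeff k * ((r:ℂ) * Complex.exp ((θ:ℂ) * Complex.I))^k
        = ((r^k : ℝ) : ℂ) * (p.coeff k * Complex.exp ((k:ℂ) * (θ:ℂ) * Complex.I)) by
      rw [mul_pow, ← Complex.exp_nat_mul]; push_cast; ring]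
    rw [Complex.re_ofReal_mul]
    ring
  have hQn : Q.coeff n = (p.leadingCoeff * Complex.exp ((n:ℂ) * (θ:ℂ) * Complex.I)).re := by
    rw [hQ, Polynomial.finset_sum_coeff]
    simp only [Polynomial.coeff_C_mul, Polynomial.coeff_X_pow]
    rw [Finset.sum_eq_single n]
    · rw [if_pos rfl, mul_one, hn', Polynomial.coeff_natDegree]
    · intro b _ hbn
      rw [if_neg (Ne.symm hbn), mul_zero]
    · intro hnotmem
      exact absurd (Finset.self_mem_range_succ n) hnotmem
  have hQne : Q.coeff n ≠ 0 := by rw [hQn]; exact ne_of_lt h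
  have hdeg_le : Q.natDegree ≤ n := by
    rw [hQ]
    exact Polynomial.natDegree_sum_le_of_forall_le _ _ fun k hk =>
      (Polynomial.natDegree_C_mul_X_pow_le _ _).trans (Nat.lt_succ_iff.mp (Finset.mem_range.mp hk))
  have hQdeg : Q.natDegree = n := le_antisymm hdeg_le (Polynomial.le_natDegree_of_ne_zero hQne)
  have hlead : Q.leadingCoeff < 0 := by
    rw [Polynomial.leadingCoeff, hQdeg, hQn]; exact h
  have hdegpos : 0 < Q.degree :=
    Polynomial.natDegree_pos_iff_degree_pos.mp (by rw [hQdeg]; omega)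
  have htend := Polynomial.tendsto_atBot_of_leadingCoeff_nonpos Q hdegpos hlead.le
  have hev : ∀ᶠ r in atTop, Q.eval r < 0 := htend.eventually (eventually_lt_atBot 0)
  obtain ⟨R, hR⟩ := Filter.eventually_atTop.mp hev
  exact ⟨R, fun r hr => by rw [← hQeval r]; exact hR r hr⟩

lemma negOnRay_of_cosArg_neg (p : Polynomial ℂ) (hp : p ≠ 0) (h0 : p.coeff 0 = 0) (θ : ℝ)
    (h : cosArg p θ < 0) : NegOnRay p θ := by
  apply negOnRay_of_lead p (natDeg_pos p hp h0) θ
  rw [Fc_eq]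
  exact mul_neg_of_pos_of_neg (norm_pos_iff.mpr (Polynomial.leadingCoeff_ne_zero.mpr hp)) h

lemma negOnRay_neg_of_cosArg_pos (p : Polynomial ℂ) (hp : p ≠ 0) (h0 : p.coeff 0 = 0) (θ : ℝ)
    (h : 0 < cosArg p θ) : NegOnRay (-p) θ := by
  have hn : 1 ≤ (-p).natDegree := by rw [Polynomial.natDegree_neg]; exact natDeg_pos p hp h0
  apply negOnRay_of_lead (-p) hn θ
  rw [Polynomial.natDegree_neg, Polynomial.leadingCoeff_neg, neg_mul, Complex.neg_re, Fc_eq]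
  have habs : 0 < ‖p.leadingCoeff‖ :=
    norm_pos_iff.mpr (Polynomial.leadingCoeff_ne_zero.mpr hp)
  have := mul_pos habs h
  unfold cosArg at this
  linarith

lemma dichotomy (p : Polynomial ℂ) (hp : p ≠ 0) (h0 : p.coeff 0 = 0) (θ : ℝ)
    (h : cosArg p θ ≠ 0) : NegOnRay p θ ∨ NegOnRay (-p) θ := by
  rcases h.lt_or_gt with h' | h'
  · exact Or.inl (negOnRay_of_cosArg_neg p hp h0 θ h')
  · exact Or.inr (negOnRay_neg_of_cosArg_pos p hp h0 θ h')

lemma countable_cosArg_zero (p : Polynomial ℂ) (hn : 1 ≤ p.natDegree) :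
    Set.Countable {θ : ℝ | cosArg p θ = 0} := by
  unfold cosArg
  exact countable_cos_zero p.natDegree hn (Complex.arg p.leadingCoeff)

lemma exists_cosArg_neg (p : Polynomial ℂ) (hn : 1 ≤ p.natDegree) : ∃ θ, cosArg p θ < 0 := by
  have hn0 : (p.natDegree:ℝ) ≠ 0 := Nat.cast_ne_zero.mpr (by omega)
  refine ⟨(π - Complex.arg p.leadingCoeff)/(p.natDegree : ℝ), ?_⟩
  unfold cosArg
  rw [show (p.natDegree:ℝ) * ((π - Complex.arg p.leadingCoeff)/(p.natDegree : ℝ))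
      + Complex.arg p.leadingCoeff = π by field_simp; ring, Real.cos_pi]
  norm_num

lemma isOpen_cosArg_neg (p : Polynomial ℂ) : IsOpen {θ : ℝ | cosArg p θ < 0} := by
  have hc : Continuous fun θ : ℝ => cosArg p θ := by unfold cosArg; fun_prop
  exact isOpen_lt hc continuous_const

lemma two_poly (p q : Polynomial ℂ) (hp : p ≠ 0) (hq : q ≠ 0) (hpq : p ≠ q)
    (hp0 : p.coeff 0 = 0) (hq0 : q.coeff 0 = 0) :
    ∃ θ, (NegOnRay (p - q) θ ∧ NegOnRay q θ) ∨ (NegOnRay (q - p) θ ∧ NegOnRay p θ)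
      ∨ (NegOnRay q θ ∧ NegOnRay (-p) θ) := by
  have hd : p - q ≠ 0 := sub_ne_zero.mpr hpq
  have hd0 : (p - q).coeff 0 = 0 := by simp [hp0, hq0]
  have hnp := natDeg_pos p hp hp0
  have hnq := natDeg_pos q hq hq0
  have hnd := natDeg_pos _ hd hd0
  obtain ⟨θ, hθU, hθp, hθd⟩ := exists_avoid (isOpen_cosArg_neg q) (exists_cosArg_neg q hnq)
    (countable_cosArg_zero p hnp) (countable_cosArg_zero _ hnd)
  have hq' : NegOnRay q θ := negOnRay_of_cosArg_neg q hq hq0 θ hθU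
  rcases dichotomy p hp hp0 θ hθp with hpneg | hpneg'
  · rcases dichotomy _ hd hd0 θ hθd with h1 | h1
    · exact ⟨θ, Or.inl ⟨h1, hq'⟩⟩
    · rw [neg_sub] at h1
      exact ⟨θ, Or.inr (Or.inl ⟨h1, hpneg⟩)⟩
  · exact ⟨θ, Or.inr (Or.inr ⟨hq', hpneg'⟩)⟩

lemma pair_case (p q s : Polynomial ℂ) (hp : p ≠ 0) (hq : q ≠ 0) (hs : s ≠ 0) (hpq : p ≠ q)
    (hp0 : p.coeff 0 = 0) (hq0 : q.coeff 0 = 0) (hs0 : s.coeff 0 = 0)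
    (hex : ∃ θ, cosArg p θ < 0 ∧ cosArg q θ < 0)
    (hno : ¬ ∃ θ, NegOnRay p θ ∧ NegOnRay q θ ∧ NegOnRay s θ) :
    ∃ θ, (NegOnRay (p - q) θ ∧ NegOnRay q θ ∧ NegOnRay (-s) θ)
      ∨ (NegOnRay (q - p) θ ∧ NegOnRay p θ ∧ NegOnRay (-s) θ) := by
  have hd : p - q ≠ 0 := sub_ne_zero.mpr hpq
  have hd0 : (p - q).coeff 0 = 0 := by simp [hp0, hq0]
  have hns := natDeg_pos s hs hs0
  have hnd := natDeg_pos _ hd hd0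
  have hUopen : IsOpen {θ : ℝ | cosArg p θ < 0 ∧ cosArg q θ < 0} := by
    have h1 : Continuous fun θ : ℝ => cosArg p θ := by unfold cosArg; fun_prop
    have h2 : Continuous fun θ : ℝ => cosArg q θ := by unfold cosArg; fun_prop
    exact (isOpen_lt h1 continuous_const).inter (isOpen_lt h2 continuous_const)
  obtain ⟨θ, hθU, hθs, hθd⟩ := exists_avoid hUopen hex
    (countable_cosArg_zero s hns) (countable_cosArg_zero _ hnd)
  obtain ⟨hcp, hcq⟩ := hθU
  have hpneg := negOnRay_of_cosArg_neg p hp hp0 θ hcp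
  have hqneg := negOnRay_of_cosArg_neg q hq hq0 θ hcq
  have hsneg : NegOnRay (-s) θ := by
    rcases dichotomy s hs hs0 θ hθs with h | h
    · exact absurd ⟨θ, hpneg, hqneg, h⟩ hno
    · exact h
  rcases dichotomy _ hd hd0 θ hθd with h | h
  · exact ⟨θ, Or.inl ⟨h, hqneg, hsneg⟩⟩
  · rw [neg_sub] at h
    exact ⟨θ, Or.inr ⟨h, hpneg, hsneg⟩⟩

lemma three_poly (p q s : Polynomial ℂ) (hp : p ≠ 0) (hq : q ≠ 0) (hs : s ≠ 0)
    (hpq : p ≠ q) (hps : p ≠ s) (hqs : q ≠ s)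
    (hp0 : p.coeff 0 = 0) (hq0 : q.coeff 0 = 0) (hs0 : s.coeff 0 = 0)
    (hno : ¬ ∃ θ, NegOnRay p θ ∧ NegOnRay q θ ∧ NegOnRay s θ) :
    ∃ θ, (NegOnRay (p - q) θ ∧ NegOnRay q θ ∧ NegOnRay (-s) θ)
      ∨ (NegOnRay (q - p) θ ∧ NegOnRay p θ ∧ NegOnRay (-s) θ)
      ∨ (NegOnRay (p - s) θ ∧ NegOnRay s θ ∧ NegOnRay (-q) θ)
      ∨ (NegOnRay (s - p) θ ∧ NegOnRay p θ ∧ NegOnRay (-q) θ)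
      ∨ (NegOnRay (q - s) θ ∧ NegOnRay s θ ∧ NegOnRay (-p) θ)
      ∨ (NegOnRay (s - q) θ ∧ NegOnRay q θ ∧ NegOnRay (-p) θ) := by
  have hnp := natDeg_pos p hp hp0
  have hnq := natDeg_pos q hq hq0
  have hns := natDeg_pos s hs hs0
  have h := exists_pair p.natDegree q.natDegree s.natDegree hnp hnq hns
    (Complex.arg p.leadingCoeff) (Complex.arg q.leadingCoeff) (Complex.arg s.leadingCoeff)
  rcases h with h | h | h
  · obtain ⟨θ, hc⟩ := pair_case p q s hp hq hs hpq hp0 hq0 hs0 h hno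
    exact ⟨θ, hc.imp id Or.inl⟩
  · have hno' : ¬ ∃ θ, NegOnRay p θ ∧ NegOnRay s θ ∧ NegOnRay q θ := by
      rintro ⟨θ, h1, h2, h3⟩
      exact hno ⟨θ, h1, h3, h2⟩
    obtain ⟨θ, hc⟩ := pair_case p s q hp hs hq hps hp0 hs0 hq0 h hno'
    refine ⟨θ, ?_⟩
    rcases hc with hc | hc
    · exact Or.inr (Or.inr (Or.inl hc))
    · exact Or.inr (Or.inr (Or.inr (Or.inl hc)))
  · have hno' : ¬ ∃ θ, NegOnRay q θ ∧ NegOnRay s θ ∧ NegOnRay p θ := by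
      rintro ⟨θ, h1, h2, h3⟩
      exact hno ⟨θ, h3, h1, h2⟩
    obtain ⟨θ, hc⟩ := pair_case q s p hq hs hp hqs hq0 hs0 hp0 h hno'
    refine ⟨θ, ?_⟩
    rcases hc with hc | hc
    · exact Or.inr (Or.inr (Or.inr (Or.inr (Or.inl hc))))
    · exact Or.inr (Or.inr (Or.inr (Or.inr (Or.inr hc))))

lemma perm3 (i j k : Fin 3) (hij : i ≠ j) (hik : i ≠ k) (hjk : j ≠ k) :
    ∃ σ : Equiv.Perm (Fin 3), σ 0 = i ∧ σ 1 = j ∧ σ 2 = k := by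
  revert hij hik hjk
  revert i j k
  decide

end Statement14Aux

open Statement14Aux in
/-- Lemma 11.2: for pairwise distinct polynomials `κ₁, κ₂, κ₃`
with zero constant term such that no ray has `κ₁ ≺ 0`, `κ₂ ≺ 0`, `κ₃ ≺ 0`
simultaneously, after relabelling there is a ray `arg z = θ` on which
(A) `κ₁ ≺ κ₂ ≺ 0 ≺ κ₃`, or (B) `κ₁ ≺ κ₂ ≺ 0` and `κ₃ = 0`, or
(C) `κ₁ ≺ 0 ≺ κ₃` and `κ₂ = 0`. -/
theorem exponential_parts_trichotomy
    (κ₁ κ₂ κ₃ : Polynomial ℂ)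
    (h12 : κ₁ ≠ κ₂) (h13 : κ₁ ≠ κ₃) (h23 : κ₂ ≠ κ₃)
    (hc1 : κ₁.coeff 0 = 0) (hc2 : κ₂.coeff 0 = 0) (hc3 : κ₃.coeff 0 = 0)
    (hno : ¬ ∃ θ : ℝ, NegOnRay κ₁ θ ∧ NegOnRay κ₂ θ ∧ NegOnRay κ₃ θ) :
    ∃ σ : Equiv.Perm (Fin 3), ∃ θ : ℝ,
      (NegOnRay (![κ₁, κ₂, κ₃] (σ 0) - ![κ₁, κ₂, κ₃] (σ 1)) θ ∧
        NegOnRay (![κ₁, κ₂, κ₃] (σ 1)) θ ∧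
        NegOnRay (-(![κ₁, κ₂, κ₃] (σ 2))) θ) ∨
      (NegOnRay (![κ₁, κ₂, κ₃] (σ 0) - ![κ₁, κ₂, κ₃] (σ 1)) θ ∧
        NegOnRay (![κ₁, κ₂, κ₃] (σ 1)) θ ∧
        ![κ₁, κ₂, κ₃] (σ 2) = 0) ∨
      (NegOnRay (![κ₁, κ₂, κ₃] (σ 0)) θ ∧
        NegOnRay (-(![κ₁, κ₂, κ₃] (σ 2))) θ ∧
        ![κ₁, κ₂, κ₃] (σ 1) = 0) := by
  by_cases h1 : κ₁ = 0
  · have hq : κ₂ ≠ 0 := fun h => h12 (h1.trans h.symm)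
    have hs : κ₃ ≠ 0 := fun h => h13 (h1.trans h.symm)
    have hqs : κ₂ ≠ κ₃ := h23
    obtain ⟨θ, hc⟩ := two_poly κ₂ κ₃ hq hs hqs hc2 hc3
    rcases hc with ⟨hA, hB⟩ | ⟨hA, hB⟩ | ⟨hA, hB⟩
    · obtain ⟨σ, e0, e1, e2⟩ := perm3 1 2 0 (by decide) (by decide) (by decide)
      refine ⟨σ, θ, Or.inr (Or.inl ⟨?_, ?_, ?_⟩)⟩ <;> simp [e0, e1, e2, hA, hB, h1]
    · obtain ⟨σ, e0, e1, e2⟩ := perm3 2 1 0 (by decide) (by decide) (by decide)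
      refine ⟨σ, θ, Or.inr (Or.inl ⟨?_, ?_, ?_⟩)⟩ <;> simp [e0, e1, e2, hA, hB, h1]
    · obtain ⟨σ, e0, e1, e2⟩ := perm3 2 0 1 (by decide) (by decide) (by decide)
      refine ⟨σ, θ, Or.inr (Or.inr ⟨?_, ?_, ?_⟩)⟩ <;> simp [e0, e1, e2, hA, hB, h1]
  · by_cases h2 : κ₂ = 0
    · have hp : κ₁ ≠ 0 := h1
      have hs : κ₃ ≠ 0 := fun h => h23 (h2.trans h.symm)
      have hps : κ₁ ≠ κ₃ := h13
      obtain ⟨θ, hc⟩ := two_poly κ₁ κ₃ hp hs hps hc1 hc3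
      rcases hc with ⟨hA, hB⟩ | ⟨hA, hB⟩ | ⟨hA, hB⟩
      · obtain ⟨σ, e0, e1, e2⟩ := perm3 0 2 1 (by decide) (by decide) (by decide)
        refine ⟨σ, θ, Or.inr (Or.inl ⟨?_, ?_, ?_⟩)⟩ <;> simp [e0, e1, e2, hA, hB, h2]
      · obtain ⟨σ, e0, e1, e2⟩ := perm3 2 0 1 (by decide) (by decide) (by decide)
        refine ⟨σ, θ, Or.inr (Or.inl ⟨?_, ?_, ?_⟩)⟩ <;> simp [e0, e1, e2, hA, hB, h2]
      · obtain ⟨σ, e0, e1, e2⟩ := perm3 2 1 0 (by decide) (by decide) (by decide)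
        refine ⟨σ, θ, Or.inr (Or.inr ⟨?_, ?_, ?_⟩)⟩ <;> simp [e0, e1, e2, hA, hB, h2]
    · by_cases h3 : κ₃ = 0
      · have hp : κ₁ ≠ 0 := h1
        have hq : κ₂ ≠ 0 := h2
        obtain ⟨θ, hc⟩ := two_poly κ₁ κ₂ hp hq h12 hc1 hc2
        rcases hc with ⟨hA, hB⟩ | ⟨hA, hB⟩ | ⟨hA, hB⟩
        · obtain ⟨σ, e0, e1, e2⟩ := perm3 0 1 2 (by decide) (by decide) (by decide)
          refine ⟨σ, θ, Or.inr (Or.inl ⟨?_, ?_, ?_⟩)⟩ <;> simp [e0, e1, e2, hA, hB, h3]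
        · obtain ⟨σ, e0, e1, e2⟩ := perm3 1 0 2 (by decide) (by decide) (by decide)
          refine ⟨σ, θ, Or.inr (Or.inl ⟨?_, ?_, ?_⟩)⟩ <;> simp [e0, e1, e2, hA, hB, h3]
        · obtain ⟨σ, e0, e1, e2⟩ := perm3 1 2 0 (by decide) (by decide) (by decide)
          refine ⟨σ, θ, Or.inr (Or.inr ⟨?_, ?_, ?_⟩)⟩ <;> simp [e0, e1, e2, hA, hB, h3]
      · obtain ⟨θ, hc⟩ := three_poly κ₁ κ₂ κ₃ h1 h2 h3 h12 h13 h23 hc1 hc2 hc3 hno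
        rcases hc with ⟨hA, hB, hC⟩ | ⟨hA, hB, hC⟩ | ⟨hA, hB, hC⟩ | ⟨hA, hB, hC⟩
          | ⟨hA, hB, hC⟩ | ⟨hA, hB, hC⟩
        · obtain ⟨σ, e0, e1, e2⟩ := perm3 0 1 2 (by decide) (by decide) (by decide)
          refine ⟨σ, θ, Or.inl ⟨?_, ?_, ?_⟩⟩ <;> simp [e0, e1, e2, hA, hB, hC]
        · obtain ⟨σ, e0, e1, e2⟩ := perm3 1 0 2 (by decide) (by decide) (by decide)
          refine ⟨σ, θ, Or.inl ⟨?_, ?_, ?_⟩⟩ <;> simp [e0, e1, e2, hA, hB, hC]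
        · obtain ⟨σ, e0, e1, e2⟩ := perm3 0 2 1 (by decide) (by decide) (by decide)
          refine ⟨σ, θ, Or.inl ⟨?_, ?_, ?_⟩⟩ <;> simp [e0, e1, e2, hA, hB, hC]
        · obtain ⟨σ, e0, e1, e2⟩ := perm3 2 0 1 (by decide) (by decide) (by decide)
          refine ⟨σ, θ, Or.inl ⟨?_, ?_, ?_⟩⟩ <;> simp [e0, e1, e2, hA, hB, hC]
        · obtain ⟨σ, e0, e1, e2⟩ := perm3 1 2 0 (by decide) (by decide) (by decide)
          refine ⟨σ, θ, Or.inl ⟨?_, ?_, ?_⟩⟩ <;> simp [e0, e1, e2, hA, hB, hC]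
        · obtain ⟨σ, e0, e1, e2⟩ := perm3 2 1 0 (by decide) (by decide) (by decide)
          refine ⟨σ, θ, Or.inl ⟨?_, ?_, ?_⟩⟩ <;> simp [e0, e1, e2, hA, hB, hC]
end

section
/- Let k ∈ ℕ, let U ⊆ ℂ be a domain, and let φ, G, f₁, …, f_k be analytic on U with φ zero-free on U. For analytic functions h₁, …, h_n on U let W(h₁, …, h_n) denote the Wronskian determinant det(h_j^{(i−1)})_{1≤i,j≤n}. Set Ψ = −(φ′/φ)·G. Then W(f₁′G + f₁Ψ, …, f_k′G + f_kΨ) = G^k·φ^{−1}·W(φ, f₁, …, f_k) on U. -/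
open Filter Finset

lemma evEq_iteratedDeriv {f g : ℂ → ℂ} {z : ℂ} (h : f =ᶠ[nhds z] g) (n : ℕ) :
    iteratedDeriv n f z = iteratedDeriv n g z := by
  have : deriv^[n] f =ᶠ[nhds z] deriv^[n] g := by
    induction n with
    | zero => exact h
    | succ n ih => simpa [Function.iterate_succ_apply'] using ih.deriv
  simpa [iteratedDeriv_eq_iterate] using this.eq_of_nhds

lemma iteratedDeriv_const_fun (c : ℂ) (n : ℕ) :
    iteratedDeriv n (fun _ : ℂ => c) = fun _ => if n = 0 then c else 0 := by
  induction n with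
  | zero => simp
  | succ n ih =>
    rw [iteratedDeriv_succ, ih]
    funext w
    rcases Nat.eq_zero_or_pos n with h | h <;> simp [h]

lemma binom_step (n : ℕ) (A B : ℕ → ℂ) :
    ∑ m ∈ range (n+1), (n.choose m : ℂ) * (A (m+1) * B (n-m) + A m * B (n-m+1))
      = ∑ m ∈ range (n+2), ((n+1).choose m : ℂ) * (A m * B (n+1-m)) := by
  have h1 : ∑ m ∈ range (n+1), (n.choose m : ℂ) * (A m * B (n-m+1))
      = ∑ m ∈ range (n+1), ((n.choose (m+1) : ℂ)) * (A (m+1) * B (n-m)) + A 0 * B (n+1) := by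
    rw [sum_range_succ' (fun m => (n.choose m : ℂ) * (A m * B (n-m+1))) n,
      sum_range_succ (fun m => ((n.choose (m+1):ℂ)) * (A (m+1) * B (n-m))) n]
    simp only [Nat.choose_succ_self, Nat.cast_zero, zero_mul, add_zero, Nat.choose_zero_right,
      Nat.cast_one, one_mul, Nat.sub_zero]
    congr 1
    apply sum_congr rfl
    intro m hm
    rw [mem_range] at hm
    congr 3
    omega
  rw [sum_range_succ' (fun m => ((n+1).choose m : ℂ) * (A m * B (n+1-m))) (n+1)]
  simp only [mul_add, sum_add_distrib, h1, Nat.choose_succ_succ, Nat.succ_sub_succ,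
    Nat.cast_add, add_mul, Nat.choose_zero_right, Nat.cast_one, one_mul, Nat.sub_zero]
  ring

lemma leibniz_iteratedDeriv {s : Set ℂ} (hs : IsOpen s) {u v : ℂ → ℂ}
    (hu : AnalyticOnNhd ℂ u s) (hv : AnalyticOnNhd ℂ v s) (n : ℕ) :
    ∀ z ∈ s, iteratedDeriv n (fun w => u w * v w) z
      = ∑ m ∈ range (n+1),
          (n.choose m : ℂ) * (iteratedDeriv m u z * iteratedDeriv (n-m) v z) := by
  have hDu : ∀ m, AnalyticOnNhd ℂ (iteratedDeriv m u) s := fun m => by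
    rw [iteratedDeriv_eq_iterate]; exact hu.iterated_deriv m
  have hDv : ∀ m, AnalyticOnNhd ℂ (iteratedDeriv m v) s := fun m => by
    rw [iteratedDeriv_eq_iterate]; exact hv.iterated_deriv m
  induction n with
  | zero => intro z hz; simp
  | succ n ih =>
    intro z hz
    rw [iteratedDeriv_succ]
    have hev : iteratedDeriv n (fun w => u w * v w) =ᶠ[nhds z]
        fun w => ∑ m ∈ range (n+1),
          (n.choose m : ℂ) * (iteratedDeriv m u w * iteratedDeriv (n-m) v w) := by
      filter_upwards [hs.mem_nhds hz] with w hw using ih w hw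
    rw [hev.deriv_eq]
    rw [deriv_fun_sum (fun m hm => by
      exact (((hDu m z hz).mul (hDv (n-m) z hz)).differentiableAt.const_mul _))]
    have : ∀ m ∈ range (n+1),
        deriv (fun w => (n.choose m : ℂ) * (iteratedDeriv m u w * iteratedDeriv (n-m) v w)) z
        = (n.choose m : ℂ) * (iteratedDeriv (m+1) u z * iteratedDeriv (n-m) v z
            + iteratedDeriv m u z * iteratedDeriv (n-m+1) v z) := by
      intro m hm
      rw [deriv_const_mul _ ((hDu m z hz).fun_mul (hDv (n-m) z hz)).differentiableAt,
        deriv_fun_mul (hDu m z hz).differentiableAt (hDv (n-m) z hz).differentiableAt,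
        ← iteratedDeriv_succ, ← iteratedDeriv_succ]
    rw [sum_congr rfl this]
    exact binom_step n (fun m => iteratedDeriv m u z) (fun m => iteratedDeriv m v z)


/-- The Wronskian determinant `W(h₁, …, h_n) = det(h_j^{(i−1)})` of `n` functions. -/
noncomputable def Wronskian (n : ℕ) (h : Fin n → ℂ → ℂ) (z : ℂ) : ℂ :=
  Matrix.det (Matrix.of fun i j : Fin n => iteratedDeriv (i : ℕ) (h j) z)

lemma wronskian_smul {s : Set ℂ} (hs : IsOpen s) {n : ℕ} {u : ℂ → ℂ} {h : Fin n → ℂ → ℂ}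
    (hu : AnalyticOnNhd ℂ u s) (hh : ∀ j, AnalyticOnNhd ℂ (h j) s) {z : ℂ} (hz : z ∈ s) :
    Wronskian n (fun j => fun w => u w * h j w) z = u z ^ n * Wronskian n h z := by
  classical
  set L : Matrix (Fin n) (Fin n) ℂ := Matrix.of fun i m =>
    if (m:ℕ) ≤ (i:ℕ) then (((i:ℕ).choose (m:ℕ) : ℕ) : ℂ)
      * iteratedDeriv ((i:ℕ) - (m:ℕ)) u z else 0 with hL
  set N : Matrix (Fin n) (Fin n) ℂ := Matrix.of fun m j => iteratedDeriv (m:ℕ) (h j) z with hN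
  have key : (Matrix.of fun i j : Fin n =>
      iteratedDeriv (i:ℕ) (fun w => u w * h j w) z) = L * N := by
    ext i j
    have hcomm : (fun w => u w * h j w) = fun w => h j w * u w := by
      funext w; ring
    rw [Matrix.of_apply, hcomm, leibniz_iteratedDeriv hs (hh j) hu (i:ℕ) z hz,
      Matrix.mul_apply]
    set g : ℕ → ℂ := fun m =>
      (if m ≤ (i:ℕ) then (((i:ℕ).choose m : ℕ) : ℂ) * iteratedDeriv ((i:ℕ) - m) u z else 0)
        * iteratedDeriv m (h j) z with hg
    have h1 : (∑ m : Fin n, L i m * N m j) = ∑ m ∈ Finset.range n, g m :=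
      Fin.sum_univ_eq_sum_range g n
    rw [h1]
    have h2 : ∑ m ∈ Finset.range n, g m = ∑ m ∈ Finset.range ((i:ℕ)+1), g m := by
      refine (Finset.sum_subset (by
        intro x hx
        rw [Finset.mem_range] at *
        omega) ?_).symm
      intro x _ hx
      rw [Finset.mem_range] at hx
      rw [hg]
      simp only []
      rw [if_neg (by omega), zero_mul]
    rw [h2]
    apply Finset.sum_congr rfl
    intro m hm
    rw [Finset.mem_range] at hm
    rw [hg]
    simp only []
    rw [if_pos (by omega)]
    ring
  have hdetL : L.det = u z ^ n := by
    have htri : L.BlockTriangular OrderDual.toDual := by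
      intro i j hij
      rw [hL, Matrix.of_apply, if_neg]
      exact fun hle => absurd hle (not_le.mpr hij)
    rw [Matrix.det_of_lowerTriangular L htri]
    have : ∀ i : Fin n, L i i = u z := by
      intro i
      rw [hL, Matrix.of_apply, if_pos le_rfl, Nat.choose_self, Nat.sub_self,
        iteratedDeriv_zero, Nat.cast_one, one_mul]
    rw [Finset.prod_congr rfl (fun i _ => this i)]
    simp
  unfold Wronskian
  rw [key, Matrix.det_mul, hdetL]

lemma wronskian_cons_one (k : ℕ) (q : Fin k → ℂ → ℂ) (z : ℂ) :
    Wronskian (k+1) (Fin.cons (fun _ => (1:ℂ)) q) z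
      = Wronskian k (fun j => deriv (q j)) z := by
  classical
  unfold Wronskian
  rw [Matrix.det_succ_column_zero]
  rw [Finset.sum_eq_single (0 : Fin (k+1))]
  · simp only [Fin.val_zero, pow_zero, one_mul, Matrix.of_apply, Fin.cons_zero,
      iteratedDeriv_zero]
    congr 1
    ext i j
    simp only [Matrix.submatrix_apply, Matrix.of_apply]
    rw [Fin.succAbove_zero]
    simp only [Fin.cons_succ, Fin.val_succ]
    rw [iteratedDeriv_succ']
  · intro i _ hi
    have : (Matrix.of fun i j : Fin (k+1) =>
        iteratedDeriv (i:ℕ) ((Fin.cons (fun _ => (1:ℂ)) q : Fin (k+1) → ℂ → ℂ) j) z) i 0 = 0 := by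
      simp only [Matrix.of_apply, Fin.cons_zero]
      rw [iteratedDeriv_const_fun]
      have : (i:ℕ) ≠ 0 := fun h0 => hi (Fin.ext (by simpa using h0))
      simp [this]
    rw [this, mul_zero, zero_mul]
  · intro h
    exact absurd (Finset.mem_univ _) h

/-- the Wronskian identity from the proof of Lemma 7.2, underlying
Frank's method: with `Ψ = −(φ'/φ)G`,
`W(f₁'G + f₁Ψ, …, f_k'G + f_kΨ) = G^k φ^{−1} W(φ, f₁, …, f_k)` on `U`. -/
theorem wronskian_identity_frank
    (k : ℕ) (hk : 1 ≤ k) (U : Set ℂ) (hUo : IsOpen U) (hUc : IsConnected U)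
    (φ G : ℂ → ℂ) (f : Fin k → ℂ → ℂ)
    (hφ : AnalyticOnNhd ℂ φ U) (hG : AnalyticOnNhd ℂ G U)
    (hf : ∀ j, AnalyticOnNhd ℂ (f j) U)
    (hφzf : ∀ z ∈ U, φ z ≠ 0) :
    ∀ z ∈ U,
      Wronskian k
        (fun j => fun w => deriv (f j) w * G w + f j w * (-(deriv φ w / φ w) * G w)) z
      = (G z) ^ k * (φ z)⁻¹ * Wronskian (k + 1) (Fin.cons φ f) z := by
  intro z hz
  classical
  set V : Set ℂ := U ∩ φ ⁻¹' {0}ᶜ with hVdef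
  have hVo : IsOpen V :=
    hφ.continuousOn.isOpen_inter_preimage hUo isOpen_compl_singleton
  have hzV : z ∈ V := ⟨hz, fun h => hφzf z hz h⟩
  have hVsub : V ⊆ U := Set.inter_subset_left
  have hφV : AnalyticOnNhd ℂ φ V := hφ.mono hVsub
  have hGV : AnalyticOnNhd ℂ G V := hG.mono hVsub
  have hfV : ∀ j, AnalyticOnNhd ℂ (f j) V := fun j => (hf j).mono hVsub
  have hφne : ∀ w ∈ V, φ w ≠ 0 := fun w hw => hw.2
  set q : Fin k → ℂ → ℂ := fun j w => f j w / φ w with hqdef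
  have hq : ∀ j, AnalyticOnNhd ℂ (q j) V := fun j => (hfV j).div hφV hφne
  have hdq : ∀ j, AnalyticOnNhd ℂ (deriv (q j)) V := fun j => (hq j).deriv
  -- pointwise identity on V for the LHS functions
  have hptw : ∀ (j : Fin k), ∀ w ∈ V,
      deriv (f j) w * G w + f j w * (-(deriv φ w / φ w) * G w)
        = G w * φ w * deriv (q j) w := by
    intro j w hw
    have hdq : deriv (q j) w
        = (deriv (f j) w * φ w - f j w * deriv φ w) / (φ w) ^ 2 := by
      rw [hqdef]
      exact deriv_div ((hfV j) w hw).differentiableAt ((hφV) w hw).differentiableAt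
        (hφne w hw)
    rw [hdq]
    have h0 : φ w ≠ 0 := hφne w hw
    field_simp
    ring
  have e1 : Wronskian k
        (fun j => fun w => deriv (f j) w * G w + f j w * (-(deriv φ w / φ w) * G w)) z
      = Wronskian k (fun j => fun w => G w * φ w * deriv (q j) w) z := by
    unfold Wronskian
    congr 1
    ext i j
    refine evEq_iteratedDeriv ?_ (i : ℕ)
    filter_upwards [hVo.mem_nhds hzV] with w hw using hptw j w hw
  have e2 : Wronskian k (fun j => fun w => (G w * φ w) * deriv (q j) w) z
      = (G z * φ z) ^ k * Wronskian k (fun j => deriv (q j)) z :=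
    wronskian_smul hVo (hGV.mul hφV) hdq hzV
  -- RHS
  set cq : Fin (k+1) → ℂ → ℂ := Fin.cons (fun _ => (1:ℂ)) q with hcq
  have hcqA : ∀ j, AnalyticOnNhd ℂ (cq j) V := by
    intro j
    refine Fin.cases ?_ ?_ j
    · rw [hcq]; simpa using analyticOnNhd_const
    · intro i; rw [hcq]; simpa using hq i
  have e3 : Wronskian (k+1) (Fin.cons φ f) z
      = Wronskian (k+1) (fun j => fun w => φ w * cq j w) z := by
    unfold Wronskian
    congr 1
    ext i j
    refine evEq_iteratedDeriv ?_ (i : ℕ)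
    filter_upwards [hVo.mem_nhds hzV] with w hw
    refine Fin.cases ?_ ?_ j
    · simp [hcq]
    · intro i'
      simp only [hcq, Fin.cons_succ]
      rw [hqdef]
      simp only []
      rw [mul_comm (φ w), div_mul_cancel₀ _ (hφne w hw)]
  have e4 : Wronskian (k+1) (fun j => fun w => φ w * cq j w) z
      = φ z ^ (k+1) * Wronskian (k+1) cq z :=
    wronskian_smul hVo hφV hcqA hzV
  have e5 : Wronskian (k+1) cq z = Wronskian k (fun j => deriv (q j)) z := by
    rw [hcq]; exact wronskian_cons_one k q z
  rw [e1, e2, e3, e4, e5]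
  have h0 : φ z ≠ 0 := hφzf z hz
  field_simp
  ring
end
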